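/- Let G be a graph, v a vertex, and k ≥ 1. If 𝛔 is a uniformly random proper k-colouring of G \ v and 𝛕 is a uniformly random proper k-colouring of G (assuming both sets are nonempty), then E[ℓ_𝛕(v)] = E[ℓ_𝛔(v)²] / E[ℓ_𝛔(v)], and consequently E[ℓ_𝛕(v)] ≥ E[ℓ_𝛔(v)]. -/

import Mathlib

theorem stmt_7 (V : Type) [Fintype V] [DecidableEq V] (G : SimpleGraph V)
    [DecidableRel G.Adj] (v : V) (k : ℕ) (hk : 1 ≤ k)
    (CG : Finset (V → Fin k))
    (hCG : CG = Finset.univ.filter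
      (fun τ : V → Fin k => ∀ u w : V, G.Adj u w → τ u ≠ τ w))
    (CG' : Finset ({u : V // u ≠ v} → Fin k))
    (hCG' : CG' = Finset.univ.filter
      (fun σ : {u : V // u ≠ v} → Fin k =>
        ∀ a b : {u : V // u ≠ v}, G.Adj a.1 b.1 → σ a ≠ σ b))
    (hne : CG.Nonempty) (hne' : CG'.Nonempty)
    (ℓτ : (V → Fin k) → ℕ)
    (hℓτ : ∀ τ, ℓτ τ = (Finset.univ.filter
      (fun c : Fin k => ∀ u : V, G.Adj u v → τ u ≠ c)).card)
    (ℓσ : ({u : V // u ≠ v} → Fin k) → ℕ)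
    (hℓσ : ∀ σ, ℓσ σ = (Finset.univ.filter
      (fun c : Fin k => ∀ u : {u : V // u ≠ v}, G.Adj u.1 v → σ u ≠ c)).card) :
    (∑ τ ∈ CG, (ℓτ τ : ℝ)) / CG.card =
        (∑ σ ∈ CG', (ℓσ σ : ℝ) ^ 2 / CG'.card) / (∑ σ ∈ CG', (ℓσ σ : ℝ) / CG'.card) ∧
      (∑ σ ∈ CG', (ℓσ σ : ℝ)) / CG'.card ≤ (∑ τ ∈ CG, (ℓτ τ : ℝ)) / CG.card := by
  classical
  set res : (V → Fin k) → ({u : V // u ≠ v} → Fin k) := fun τ u => τ u.1 with hres_def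
  have hℓ : ∀ τ, ℓτ τ = ℓσ (res τ) := by
    intro τ
    rw [hℓτ, hℓσ]
    congr 1
    apply Finset.filter_congr
    intro c _
    constructor
    · intro h u hu; exact h u.1 hu
    · intro h u hu
      have huv : u ≠ v := by
        intro e; subst e; exact G.irrefl hu
      exact h ⟨u, huv⟩ hu
  have hmaps : ∀ τ ∈ CG, res τ ∈ CG' := by
    intro τ hτ
    rw [hCG] at hτ; rw [hCG']
    simp only [Finset.mem_filter, Finset.mem_univ, true_and] at *
    intro a b hab; exact hτ a.1 b.1 hab
  have hfiber : ∀ σ ∈ CG', (CG.filter (fun τ => res τ = σ)).card = ℓσ σ := by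
    intro σ hσ
    rw [hℓσ]
    apply Finset.card_bij (fun τ _ => τ v)
    · intro τ hτ
      simp only [Finset.mem_filter, Finset.mem_univ, true_and] at hτ ⊢
      obtain ⟨hτCG, hτres⟩ := hτ
      intro u hu
      rw [hCG] at hτCG
      simp only [Finset.mem_filter, Finset.mem_univ, true_and] at hτCG
      have h1 := hτCG u.1 v hu
      rw [← hτres]; exact h1
    · intro τ₁ h₁ τ₂ h₂ hv
      simp only [Finset.mem_filter] at h₁ h₂
      funext w
      by_cases hw : w = v
      · subst hw; exact hv
      · have e1 := congrFun h₁.2 ⟨w, hw⟩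
        have e2 := congrFun h₂.2 ⟨w, hw⟩
        simp only [res] at e1 e2
        rw [e1, e2]
    · intro c hc
      simp only [Finset.mem_filter, Finset.mem_univ, true_and] at hc
      rw [hCG'] at hσ
      simp only [Finset.mem_filter, Finset.mem_univ, true_and] at hσ
      refine ⟨fun w => if h : w = v then c else σ ⟨w, h⟩, ?_, by simp⟩
      simp only [Finset.mem_filter]
      constructor
      · rw [hCG]; simp only [Finset.mem_filter, Finset.mem_univ, true_and]
        intro a b hab
        by_cases ha : a = v
        · have hb : b ≠ v := by
            intro e; rw [ha, e] at hab; exact G.irrefl hab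
          rw [dif_pos ha, dif_neg hb]
          exact fun e => hc ⟨b, hb⟩ (by show G.Adj b v; rw [← ha]; exact G.adj_symm hab) e.symm
        · by_cases hb : b = v
          · rw [dif_neg ha, dif_pos hb]
            exact hc ⟨a, ha⟩ (by show G.Adj a v; rw [← hb]; exact hab)
          · simp only [dif_neg ha, dif_neg hb]
            exact hσ ⟨a, ha⟩ ⟨b, hb⟩ hab
      · funext u
        simp only [res, dif_neg u.2]
  have key : ∀ f : ({u : V // u ≠ v} → Fin k) → ℝ,
      ∑ τ ∈ CG, f (res τ) = ∑ σ ∈ CG', (ℓσ σ : ℝ) * f σ := by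
    intro f
    rw [← Finset.sum_fiberwise_of_maps_to hmaps (fun τ => f (res τ))]
    apply Finset.sum_congr rfl
    intro σ hσ
    rw [Finset.sum_congr rfl (fun τ hτ => by
      rw [(Finset.mem_filter.mp hτ).2]), Finset.sum_const, nsmul_eq_mul,
      hfiber σ hσ]
  have A : (CG.card : ℝ) = ∑ σ ∈ CG', (ℓσ σ : ℝ) := by
    have := key 1
    simpa using this
  have B : ∑ τ ∈ CG, (ℓτ τ : ℝ) = ∑ σ ∈ CG', (ℓσ σ : ℝ) ^ 2 := by
    have := key (fun σ => (ℓσ σ : ℝ))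
    calc ∑ τ ∈ CG, (ℓτ τ : ℝ) = ∑ τ ∈ CG, (ℓσ (res τ) : ℝ) := by
          apply Finset.sum_congr rfl; intro τ _; rw [hℓ]
      _ = ∑ σ ∈ CG', (ℓσ σ : ℝ) * (ℓσ σ : ℝ) := this
      _ = ∑ σ ∈ CG', (ℓσ σ : ℝ) ^ 2 := by
          apply Finset.sum_congr rfl; intro σ _; ring
  have hSpos : 0 < ∑ σ ∈ CG', (ℓσ σ : ℝ) := by
    rw [← A]
    exact_mod_cast Finset.card_pos.mpr hne
  have hnpos : (0 : ℝ) < CG'.card := by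
    exact_mod_cast Finset.card_pos.mpr hne'
  have hdiv1 : (∑ σ ∈ CG', (ℓσ σ : ℝ) ^ 2 / CG'.card) =
      (∑ σ ∈ CG', (ℓσ σ : ℝ) ^ 2) / CG'.card := by rw [← Finset.sum_div]
  have hdiv2 : (∑ σ ∈ CG', (ℓσ σ : ℝ) / CG'.card) =
      (∑ σ ∈ CG', (ℓσ σ : ℝ)) / CG'.card := by rw [← Finset.sum_div]
  have hmain : (∑ τ ∈ CG, (ℓτ τ : ℝ)) / CG.card =
      (∑ σ ∈ CG', (ℓσ σ : ℝ) ^ 2) / (∑ σ ∈ CG', (ℓσ σ : ℝ)) := by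
    rw [B, A]
  constructor
  · rw [hmain, hdiv1, hdiv2, div_div_div_cancel_right₀]
    exact ne_of_gt hnpos
  · rw [hmain]
    rw [div_le_div_iff₀ hnpos hSpos]
    have cs : (∑ σ ∈ CG', (ℓσ σ : ℝ)) ^ 2 ≤
        CG'.card * ∑ σ ∈ CG', (ℓσ σ : ℝ) ^ 2 := by
      have h := Finset.sum_mul_sq_le_sq_mul_sq CG' (fun _ => (1 : ℝ))
        (fun σ => (ℓσ σ : ℝ))
      simpa using h
    calc (∑ σ ∈ CG', (ℓσ σ : ℝ)) * ∑ σ ∈ CG', (ℓσ σ : ℝ)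
        = (∑ σ ∈ CG', (ℓσ σ : ℝ)) ^ 2 := by ring
      _ ≤ CG'.card * ∑ σ ∈ CG', (ℓσ σ : ℝ) ^ 2 := cs
      _ = (∑ σ ∈ CG', (ℓσ σ : ℝ) ^ 2) * CG'.card := by ring
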